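/- Let n ≥ 2 and γ ≥ 0 be integers, let P be a homogeneous harmonic polynomial of degree γ on ℝ^n, and let ζ be a real number. Then the function f(x) = ‖x‖^{ζ−γ} P(x) satisfies, for every x ∈ ℝ^n with x ≠ 0, Δ(Δ f)(x) = (ζ − γ)(ζ − γ − 2)(ζ + γ + n − 2)(ζ + γ + n − 4) ‖x‖^{ζ−γ−4} P(x). (With n = 2m this is the computation of the indicial roots of Δ² on ℂ^m: the indicial roots associated to an eigenfunction of degree γ are γ, γ+2, 2−2m−γ and 4−2m−γ.) -/

import Mathlib

/-- The Euclidean Laplacian on `ℝ^n`: the trace of the Hessian, computed as the sum of the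
second derivatives in the coordinate directions. -/
noncomputable def laplacian {n : ℕ} (f : EuclideanSpace ℝ (Fin n) → ℝ)
    (x : EuclideanSpace ℝ (Fin n)) : ℝ :=
  ∑ i : Fin n,
    iteratedFDeriv ℝ 2 f x ![EuclideanSpace.single i 1, EuclideanSpace.single i 1]

/-- `P : ℝ^n → ℝ` is a homogeneous harmonic polynomial of degree `γ`: it is a polynomial
function, homogeneous of degree `γ` (`P (t • x) = t ^ γ * P x`), and harmonic (`Δ P = 0`). -/
def IsHomHarmonicPoly (n γ : ℕ) (P : EuclideanSpace ℝ (Fin n) → ℝ) : Prop :=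
  (∃ p : MvPolynomial (Fin n) ℝ, ∀ x, P x = MvPolynomial.eval (fun i => x i) p) ∧
  (∀ (t : ℝ) (x : EuclideanSpace ℝ (Fin n)), P (t • x) = t ^ γ * P x) ∧
  (∀ x, laplacian P x = 0)

namespace S4Aux

variable {n : ℕ}

/-- coordinate basis vector -/
noncomputable abbrev ee (n : ℕ) (i : Fin n) : EuclideanSpace ℝ (Fin n) :=
  EuclideanSpace.single i 1

/-- squared norm as a sum -/
def Nf (y : EuclideanSpace ℝ (Fin n)) : ℝ := ∑ i, y i * y i

/-- derivative of `Nf` -/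
noncomputable def Nd (y : EuclideanSpace ℝ (Fin n)) : EuclideanSpace ℝ (Fin n) →L[ℝ] ℝ :=
  ∑ i, (2 * y i) • (EuclideanSpace.proj i : EuclideanSpace ℝ (Fin n) →L[ℝ] ℝ)

lemma hasFDerivAt_Nf (y : EuclideanSpace ℝ (Fin n)) : HasFDerivAt Nf (Nd y) y := by
  have h : ∀ i ∈ Finset.univ, HasFDerivAt (fun z : EuclideanSpace ℝ (Fin n) => z i * z i)
      ((2 * y i) • (EuclideanSpace.proj i : EuclideanSpace ℝ (Fin n) →L[ℝ] ℝ)) y := by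
    intro i _
    have := ((EuclideanSpace.proj (𝕜 := ℝ) i).hasFDerivAt (x := y)).mul
      ((EuclideanSpace.proj (𝕜 := ℝ) i).hasFDerivAt (x := y))
    refine HasFDerivAt.congr_fderiv this ?_
    · rw [two_mul, add_smul]
      rfl
  exact HasFDerivAt.fun_sum h

lemma Nd_apply_ee (y : EuclideanSpace ℝ (Fin n)) (j : Fin n) :
    Nd y (ee n j) = 2 * y j := by
  simp [Nd, ee, ContinuousLinearMap.sum_apply, EuclideanSpace.single_apply,
    mul_ite, mul_one, mul_zero, Finset.sum_ite_eq, Finset.sum_ite_eq']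

lemma Nf_eq_norm_sq (y : EuclideanSpace ℝ (Fin n)) : Nf y = ‖y‖ ^ (2 : ℕ) := by
  rw [EuclideanSpace.norm_eq, Real.sq_sqrt]
  · unfold Nf
    congr 1
    funext i
    rw [Real.norm_eq_abs, sq_abs, sq]
  · exact Finset.sum_nonneg fun i _ => sq_nonneg _

lemma Nf_pos {y : EuclideanSpace ℝ (Fin n)} (hy : y ≠ 0) : 0 < Nf y := by
  rw [Nf_eq_norm_sq]
  exact pow_pos (norm_pos_iff.2 hy) 2

lemma contDiff_Nf : ContDiff ℝ ⊤ (Nf (n := n)) :=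
  ContDiff.sum fun i _ =>
    ((EuclideanSpace.proj (𝕜 := ℝ) i).contDiff).mul (EuclideanSpace.proj (𝕜 := ℝ) i).contDiff

lemma norm_rpow_eq (y : EuclideanSpace ℝ (Fin n)) (α : ℝ) :
    ‖y‖ ^ α = Nf y ^ (α / 2) := by
  have h0 : (0:ℝ) ≤ ∑ i, ‖y i‖ ^ 2 := Finset.sum_nonneg fun i _ => sq_nonneg _
  have hN : Nf y = ∑ i, ‖y i‖ ^ 2 := by
    unfold Nf; congr 1; funext i; rw [Real.norm_eq_abs, sq_abs, sq]
  rw [EuclideanSpace.norm_eq, Real.sqrt_eq_rpow, ← Real.rpow_mul h0, ← hN]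
  congr 1
  ring


lemma laplacian_eq_sum (f : EuclideanSpace ℝ (Fin n) → ℝ) (x : EuclideanSpace ℝ (Fin n)) :
    laplacian f x = ∑ i, fderiv ℝ (fderiv ℝ f) x (ee n i) (ee n i) := by
  unfold laplacian
  refine Finset.sum_congr rfl fun i _ => ?_
  rw [iteratedFDeriv_two_apply]
  simp [ee]

lemma laplacian_congr {f g : EuclideanSpace ℝ (Fin n) → ℝ} {x : EuclideanSpace ℝ (Fin n)}
    (h : f =ᶠ[nhds x] g) : laplacian f x = laplacian g x := by
  rw [laplacian_eq_sum, laplacian_eq_sum]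
  refine Finset.sum_congr rfl fun i _ => ?_
  rw [h.fderiv.fderiv_eq]

lemma laplacian_eq_sum' {f : EuclideanSpace ℝ (Fin n) → ℝ} {x : EuclideanSpace ℝ (Fin n)}
    (hf : DifferentiableAt ℝ (fderiv ℝ f) x) :
    laplacian f x = ∑ i, fderiv ℝ (fun y => fderiv ℝ f y (ee n i)) x (ee n i) := by
  rw [laplacian_eq_sum]
  refine Finset.sum_congr rfl fun i _ => ?_
  rw [fderiv_clm_apply hf (differentiableAt_const _)]
  simp

lemma contDiff_of_poly {P : EuclideanSpace ℝ (Fin n) → ℝ}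
    (hp : ∃ p : MvPolynomial (Fin n) ℝ, ∀ x, P x = MvPolynomial.eval (fun i => x i) p) :
    ContDiff ℝ ⊤ P := by
  obtain ⟨p, hp⟩ := hp
  have hPe : P = fun x => MvPolynomial.eval (fun i => x i) p := funext hp
  rw [hPe]
  clear hPe hp
  induction p using MvPolynomial.induction_on with
  | C a => simpa only [MvPolynomial.eval_C] using contDiff_const
  | add p q hq hq' => simpa only [map_add] using hq.add hq'
  | mul_X p i hq =>
      simp only [map_mul, MvPolynomial.eval_X]
      exact hq.mul (EuclideanSpace.proj (𝕜 := ℝ) i).contDiff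

lemma sum_coord_smul (x : EuclideanSpace ℝ (Fin n)) :
    ∑ i, x i • ee n i = x := by
  have := (EuclideanSpace.basisFun (Fin n) ℝ).sum_repr x
  simpa [EuclideanSpace.basisFun_apply, EuclideanSpace.basisFun_repr, ee] using this

lemma euler {γ : ℕ} {P : EuclideanSpace ℝ (Fin n) → ℝ} (hs : ContDiff ℝ ⊤ P)
    (hh : ∀ (t : ℝ) (x : EuclideanSpace ℝ (Fin n)), P (t • x) = t ^ γ * P x)
    (y : EuclideanSpace ℝ (Fin n)) : fderiv ℝ P y y = (γ : ℝ) * P y := by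
  have hd : HasDerivAt (fun t : ℝ => t • y) y 1 := by
    simpa using (hasDerivAt_id (1:ℝ)).smul_const y
  have h1 : HasDerivAt (fun t : ℝ => P (t • y)) (fderiv ℝ P y y) 1 := by
    have h := (hs.differentiable (by simp) ((1:ℝ) • y)).hasFDerivAt.comp_hasDerivAt 1 hd
    simp only [one_smul] at h
    exact h
  have h2 : HasDerivAt (fun t : ℝ => P (t • y)) ((γ : ℝ) * P y) 1 := by
    have he : (fun t : ℝ => P (t • y)) = fun t : ℝ => t ^ γ * P y := funext fun t => hh t y
    rw [he]
    simpa using (hasDerivAt_pow γ (1:ℝ)).mul_const (P y)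
  exact h1.unique h2

lemma euler_sum {γ : ℕ} {P : EuclideanSpace ℝ (Fin n) → ℝ} (hs : ContDiff ℝ ⊤ P)
    (hh : ∀ (t : ℝ) (x : EuclideanSpace ℝ (Fin n)), P (t • x) = t ^ γ * P x)
    (y : EuclideanSpace ℝ (Fin n)) :
    ∑ i, y i * fderiv ℝ P y (ee n i) = (γ : ℝ) * P y := by
  calc ∑ i, y i * fderiv ℝ P y (ee n i)
      = fderiv ℝ P y (∑ i, y i • ee n i) := by rw [map_sum]; simp [smul_eq_mul]
    _ = (γ : ℝ) * P y := by rw [sum_coord_smul]; exact euler hs hh y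

lemma harm_sum {P : EuclideanSpace ℝ (Fin n) → ℝ} (hs : ContDiff ℝ ⊤ P)
    (hl : ∀ x, laplacian P x = 0) (y : EuclideanSpace ℝ (Fin n)) :
    ∑ i, fderiv ℝ (fun z => fderiv ℝ P z (ee n i)) y (ee n i) = 0 := by
  have h := hl y
  rwa [laplacian_eq_sum' (((hs.fderiv_right (m := 1) le_top).differentiable one_ne_zero) y)] at h


lemma proj_apply_ee (i : Fin n) :
    (EuclideanSpace.proj (𝕜 := ℝ) i) (ee n i) = 1 := by
  simp [ee]

lemma key {γ : ℕ} {P : EuclideanSpace ℝ (Fin n) → ℝ} (hP : IsHomHarmonicPoly n γ P)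
    (c α : ℝ) {x : EuclideanSpace ℝ (Fin n)} (hx : x ≠ 0) :
    laplacian (fun y => c * (‖y‖ ^ α * P y)) x
      = (c * (α * (α + 2 * (γ : ℝ) + (n : ℝ) - 2))) * (‖x‖ ^ (α - 2) * P x) := by
  obtain ⟨hpoly, hhom, hharm⟩ := hP
  have hs : ContDiff ℝ ⊤ P := contDiff_of_poly hpoly
  set β : ℝ := α / 2 with hβ
  have hα : α = 2 * β := by rw [hβ]; ring
  have hfun : (fun y : EuclideanSpace ℝ (Fin n) => c * (‖y‖ ^ α * P y))
      = fun y => c * (Nf y ^ β * P y) := by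
    funext y; rw [norm_rpow_eq]
  rw [hfun]
  have hNx : Nf x ≠ 0 := (Nf_pos hx).ne'
  -- first derivative on the punctured space
  have hDg : ∀ (i : Fin n) (y : EuclideanSpace ℝ (Fin n)), y ≠ 0 →
      fderiv ℝ (fun z => c * (Nf z ^ β * P z)) y (ee n i)
        = c * (Nf y ^ β * fderiv ℝ P y (ee n i)
            + P y * (β * Nf y ^ (β - 1) * (2 * y i))) := by
    intro i y hy
    have h1 : HasFDerivAt (fun z : EuclideanSpace ℝ (Fin n) => Nf z ^ β)
        ((β * Nf y ^ (β - 1)) • Nd y) y :=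
      (hasFDerivAt_Nf y).rpow_const (Or.inl (Nf_pos hy).ne')
    have h2 := (hs.differentiable (by simp) y).hasFDerivAt
    have h3 : HasFDerivAt (fun z : EuclideanSpace ℝ (Fin n) => c * (Nf z ^ β * P z))
        (c • ((Nf y ^ β) • fderiv ℝ P y + P y • ((β * Nf y ^ (β - 1)) • Nd y))) y :=
      (h1.mul h2).const_mul c
    rw [h3.fderiv]
    simp only [ContinuousLinearMap.coe_smul', Pi.smul_apply, ContinuousLinearMap.add_apply,
      ContinuousLinearMap.smul_apply, Nd_apply_ee, smul_eq_mul]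
    try ring
  -- smoothness of pieces at x
  have hpdC : ∀ i : Fin n, ContDiff ℝ ⊤ (fun z => fderiv ℝ P z (ee n i)) := fun i =>
    (hs.fderiv_right le_top).clm_apply contDiff_const
  have hgc : ContDiffAt ℝ ⊤ (fun z : EuclideanSpace ℝ (Fin n) => c * (Nf z ^ β * P z)) x :=
    contDiffAt_const.mul ((contDiff_Nf.contDiffAt.rpow_const_of_ne hNx).mul hs.contDiffAt)
  have hdiff : DifferentiableAt ℝ
      (fderiv ℝ (fun z : EuclideanSpace ℝ (Fin n) => c * (Nf z ^ β * P z))) x :=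
    (hgc.fderiv_right (m := 1) le_top).differentiableAt one_ne_zero
  -- second directional derivatives
  have hT : ∀ i : Fin n,
      fderiv ℝ (fun y => c * (Nf y ^ β * fderiv ℝ P y (ee n i)
          + P y * (β * Nf y ^ (β - 1) * (2 * y i)))) x (ee n i)
        = (c * Nf x ^ β) * (fderiv ℝ (fun z => fderiv ℝ P z (ee n i)) x (ee n i))
          + (c * (4 * β) * Nf x ^ (β - 1)) * (x i * fderiv ℝ P x (ee n i))
          + (c * (4 * β * (β - 1)) * Nf x ^ (β - 1 - 1) * P x) * (x i * x i)
          + c * (2 * β) * Nf x ^ (β - 1) * P x := by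
    intro i
    have hA : HasFDerivAt (fun z : EuclideanSpace ℝ (Fin n) => Nf z ^ β)
        ((β * Nf x ^ (β - 1)) • Nd x) x :=
      (hasFDerivAt_Nf x).rpow_const (Or.inl hNx)
    have hA' : HasFDerivAt (fun z : EuclideanSpace ℝ (Fin n) => Nf z ^ (β - 1))
        (((β - 1) * Nf x ^ (β - 1 - 1)) • Nd x) x :=
      (hasFDerivAt_Nf x).rpow_const (Or.inl hNx)
    have hpdi : HasFDerivAt (fun z => fderiv ℝ P z (ee n i))
        (fderiv ℝ (fun z => fderiv ℝ P z (ee n i)) x) x :=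
      (((hpdC i).differentiable (by simp)) x).hasFDerivAt
    have hPx := (hs.differentiable (by simp) x).hasFDerivAt
    have hBi : HasFDerivAt (fun z : EuclideanSpace ℝ (Fin n) => z i)
        (EuclideanSpace.proj (𝕜 := ℝ) i) x :=
      (EuclideanSpace.proj (𝕜 := ℝ) i).hasFDerivAt
    have hφ : HasFDerivAt (fun y : EuclideanSpace ℝ (Fin n) =>
        c * (Nf y ^ β * fderiv ℝ P y (ee n i) + P y * (β * Nf y ^ (β - 1) * (2 * y i)))) _ x :=
      ((hA.mul hpdi).add (hPx.mul ((hA'.const_mul β).mul (hBi.const_mul 2)))).const_mul c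
    rw [hφ.fderiv]
    simp only [ContinuousLinearMap.coe_smul', Pi.smul_apply, ContinuousLinearMap.add_apply,
      ContinuousLinearMap.smul_apply, Nd_apply_ee, proj_apply_ee, smul_eq_mul, Pi.mul_apply]
    ring
  -- assemble
  rw [laplacian_eq_sum' hdiff]
  have hsum : ∀ i ∈ Finset.univ, fderiv ℝ
      (fun y => fderiv ℝ (fun z : EuclideanSpace ℝ (Fin n) => c * (Nf z ^ β * P z)) y (ee n i))
      x (ee n i)
      = (c * Nf x ^ β) * (fderiv ℝ (fun z => fderiv ℝ P z (ee n i)) x (ee n i))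
        + (c * (4 * β) * Nf x ^ (β - 1)) * (x i * fderiv ℝ P x (ee n i))
        + (c * (4 * β * (β - 1)) * Nf x ^ (β - 1 - 1) * P x) * (x i * x i)
        + c * (2 * β) * Nf x ^ (β - 1) * P x := by
    intro i _
    have hev : (fun y => fderiv ℝ (fun z : EuclideanSpace ℝ (Fin n) =>
          c * (Nf z ^ β * P z)) y (ee n i))
        =ᶠ[nhds x] (fun y => c * (Nf y ^ β * fderiv ℝ P y (ee n i)
            + P y * (β * Nf y ^ (β - 1) * (2 * y i)))) := by
      filter_upwards [isOpen_compl_singleton.mem_nhds (Set.mem_compl_singleton_iff.mpr hx)]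
        with y hy
      exact hDg i y hy
    rw [hev.fderiv_eq, hT i]
  rw [Finset.sum_congr rfl hsum]
  have hNfx : ∑ i, x i * x i = Nf x := rfl
  rw [Finset.sum_add_distrib, Finset.sum_add_distrib, Finset.sum_add_distrib,
    ← Finset.mul_sum, ← Finset.mul_sum, ← Finset.mul_sum,
    harm_sum hs hharm x, euler_sum hs hhom x, hNfx, Finset.sum_const, Finset.card_univ,
    Fintype.card_fin, nsmul_eq_mul]
  rw [norm_rpow_eq x (α - 2), show (α - 2) / 2 = β - 1 by rw [hβ]; ring, hα]
  have hut : Nf x ^ (β - 1 - 1) * Nf x = Nf x ^ (β - 1) := by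
    have h1 : Nf x ^ (β - 1 - 1) * Nf x ^ (1 : ℝ) = Nf x ^ (β - 1 - 1 + 1) :=
      (Real.rpow_add (Nf_pos hx) _ _).symm
    rw [Real.rpow_one] at h1
    rw [h1, show β - 1 - 1 + 1 = β - 1 by ring]
  linear_combination (c * (4 * β * (β - 1)) * P x) * hut

end S4Aux

/-- Indicial-root computation: for a homogeneous harmonic polynomial `P`
of degree `γ` on `ℝ^n` (`n ≥ 2`) and `ζ ∈ ℝ`, the function `f(x) = ‖x‖^(ζ-γ) P(x)`
satisfies, for every `x ≠ 0`,
`Δ²f(x) = (ζ-γ)(ζ-γ-2)(ζ+γ+n-2)(ζ+γ+n-4) ‖x‖^(ζ-γ-4) P(x)`.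
(With `n = 2m` this computes the indicial roots `γ, γ+2, 2-2m-γ, 4-2m-γ` of `Δ²` on `ℂ^m`.) -/

theorem statement4 (n γ : ℕ) (hn : 2 ≤ n) (P : EuclideanSpace ℝ (Fin n) → ℝ)
    (hP : IsHomHarmonicPoly n γ P) (ζ : ℝ) :
    ∀ x : EuclideanSpace ℝ (Fin n), x ≠ 0 →
      laplacian (laplacian (fun y => ‖y‖ ^ (ζ - (γ : ℝ)) * P y)) x
        = (ζ - (γ : ℝ)) * (ζ - (γ : ℝ) - 2) * (ζ + (γ : ℝ) + (n : ℝ) - 2) *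
            (ζ + (γ : ℝ) + (n : ℝ) - 4) * ‖x‖ ^ (ζ - (γ : ℝ) - 4) * P x := by
  intro x hx
  have h1 : (fun y : EuclideanSpace ℝ (Fin n) => ‖y‖ ^ (ζ - (γ : ℝ)) * P y)
      = fun y => (1 : ℝ) * (‖y‖ ^ (ζ - (γ : ℝ)) * P y) := by
    funext y; rw [one_mul]
  have hstep : laplacian (fun y : EuclideanSpace ℝ (Fin n) => ‖y‖ ^ (ζ - (γ : ℝ)) * P y)
      =ᶠ[nhds x] fun y =>
        ((1 : ℝ) * ((ζ - (γ : ℝ)) * ((ζ - (γ : ℝ)) + 2 * (γ : ℝ) + (n : ℝ) - 2)))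
          * (‖y‖ ^ ((ζ - (γ : ℝ)) - 2) * P y) := by
    filter_upwards [isOpen_compl_singleton.mem_nhds (Set.mem_compl_singleton_iff.mpr hx)]
      with y hy
    rw [h1]
    exact S4Aux.key hP 1 (ζ - (γ : ℝ)) hy
  rw [S4Aux.laplacian_congr hstep,
    S4Aux.key hP _ ((ζ - (γ : ℝ)) - 2) hx,
    show (ζ - (γ : ℝ)) - 2 - 2 = ζ - (γ : ℝ) - 4 from by ring]
  ring
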